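/- arXiv:2103.04898 — 2 statements merged into one kernel-verified Lean document; each statement's English description precedes it below -/
import Mathlib

section
/- Suppose asset j is dominant and let K ∈ 𝒦 with K_j > 0. Then buy and hold with weight K is asymptotically log-optimal: lim_{n → ∞} g_n(K) = g_1*, where g_1* = E[log(1 + X_j(0))]. -/
open MeasureTheory ProbabilityTheory Filter Topology Finset Real

/-- Compound (total) return of asset `i` over the first `n` periods:
`R_{n,i}(ω) = ∏_{k=0}^{n-1} (1 + X_i(k)(ω))`. -/
noncomputable def compoundReturn {Ω : Type*} {m : ℕ} (X : ℕ → Ω → Fin m → ℝ)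
    (n : ℕ) (ω : Ω) (i : Fin m) : ℝ :=
  ∏ k ∈ Finset.range n, (1 + X k ω i)

/-- Expected logarithmic growth with rebalancing period `n`:
`g_n(K) = (1/n) E[log (Kᵀ R_n)]`. -/
noncomputable def elg {Ω : Type*} [MeasureSpace Ω] {m : ℕ} (X : ℕ → Ω → Fin m → ℝ)
    (n : ℕ) (K : Fin m → ℝ) : ℝ :=
  (n : ℝ)⁻¹ * ∫ ω, Real.log (∑ i, K i * compoundReturn X n ω i)

/-- The admissible set: the unit simplex in `ℝ^m`. -/
def simplex (m : ℕ) : Set (Fin m → ℝ) := {K | (∀ i, 0 ≤ K i) ∧ ∑ i, K i = 1}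

lemma aux_integral_prod_range {Ω : Type*} [MeasureSpace Ω] [IsProbabilityMeasure (ℙ : Measure Ω)]
    (f : ℕ → Ω → ℝ) (hind : iIndepFun f ℙ)
    (hmeas : ∀ k, Measurable (f k)) (C : ℝ)
    (hbd : ∀ k, ∀ᵐ ω ∂(ℙ : Measure Ω), 0 ≤ f k ω ∧ f k ω ≤ C) (n : ℕ) :
    ∫ ω, ∏ k ∈ Finset.range n, f k ω = ∏ k ∈ Finset.range n, ∫ ω, f k ω := by
  have hbd' : ∀ᵐ ω ∂(ℙ : Measure Ω), ∀ k, 0 ≤ f k ω ∧ f k ω ≤ C := ae_all_iff.2 hbd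
  have hC : 0 ≤ C := by
    obtain ⟨ω, hω⟩ := hbd'.exists
    exact le_trans (hω 0).1 (hω 0).2
  have hint : ∀ N, Integrable (fun ω => ∏ k ∈ Finset.range N, f k ω) ℙ := by
    intro N
    refine Integrable.mono' (integrable_const (C ^ N))
      (Finset.measurable_prod _ fun k _ => hmeas k).aestronglyMeasurable ?_
    filter_upwards [hbd'] with ω hω
    rw [Real.norm_eq_abs, abs_of_nonneg (Finset.prod_nonneg fun k _ => (hω k).1)]
    calc ∏ k ∈ Finset.range N, f k ω ≤ ∏ _k ∈ Finset.range N, C :=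
          Finset.prod_le_prod (fun k _ => (hω k).1) (fun k _ => (hω k).2)
      _ = C ^ N := by simp
  induction n with
  | zero => simp
  | succ n ih =>
    have hprodeq : (fun ω => ∏ k ∈ Finset.range n, f k ω) = ∏ k ∈ Finset.range n, f k := by
      funext ω; simp [Finset.prod_apply]
    have hIndep := (hind.indepFun_prod_range_succ hmeas n)
    have h := hIndep.integral_mul_eq_mul_integral (Integrable.aestronglyMeasurable (by rw [← hprodeq]; exact hint n)) (Integrable.aestronglyMeasurable (by
      refine Integrable.mono' (integrable_const C) (hmeas n).aestronglyMeasurable ?_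
      filter_upwards [hbd'] with ω hω
      rw [Real.norm_eq_abs, abs_of_nonneg (hω n).1]; exact (hω n).2))
    rw [Finset.prod_range_succ, ← ih]
    rw [show (∫ ω, ∏ k ∈ Finset.range (n+1), f k ω) = ∫ ω, ((∏ k ∈ Finset.range n, f k) * f n) ω by
      congr 1; funext ω; simp [Finset.prod_apply, Finset.prod_range_succ]]
    rw [h, hprodeq]

/-- Ratio of single-period returns of asset `i` to asset `j` at time `k`. -/
noncomputable def auxRatio {Ω : Type*} {m : ℕ} (X : ℕ → Ω → Fin m → ℝ) (j i : Fin m)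
    (k : ℕ) (ω : Ω) : ℝ :=
  (1 + X k ω i) / (1 + X k ω j)

/-- Normalized portfolio value. -/
noncomputable def auxZ {Ω : Type*} {m : ℕ} (X : ℕ → Ω → Fin m → ℝ) (j : Fin m)
    (K : Fin m → ℝ) (n : ℕ) (ω : Ω) : ℝ :=
  ∑ i, K i * ∏ k ∈ Finset.range n, auxRatio X j i k ω

/-- **Asymptotic log-optimality of buy and hold.** If asset `j` is dominant and `K_j > 0`,
then `g_n(K) → g_1^* = E[log (1 + X_j(0))]` as `n → ∞`. -/
theorem buy_and_hold_asymptotically_log_optimal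
    {Ω : Type*} [MeasureSpace Ω] [IsProbabilityMeasure (ℙ : Measure Ω)]
    {m : ℕ} (hm : 2 ≤ m)
    (X : ℕ → Ω → Fin m → ℝ)
    (hmeas : ∀ k, Measurable (X k))
    (hiid : iIndepFun X ℙ)
    (hident : ∀ k, IdentDistrib (X k) (X 0) ℙ ℙ)
    (Xmin Xmax : Fin m → ℝ)
    (hXmin : ∀ i, -1 < Xmin i)
    (hbdd : ∀ k, ∀ᵐ ω ∂(ℙ : Measure Ω), ∀ i, Xmin i ≤ X k ω i ∧ X k ω i ≤ Xmax i)
    (j : Fin m)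
    (hdom : ∀ i, i ≠ j → ∫ ω, (1 + X 0 ω i) / (1 + X 0 ω j) ≤ 1)
    (K : Fin m → ℝ) (hK : K ∈ simplex m) (hKj : 0 < K j) :
    Tendsto (fun n : ℕ => elg X n K) atTop (𝓝 (∫ ω, Real.log (1 + X 0 ω j))) := by
  obtain ⟨hK0, hK1⟩ := hK
  set g1 : ℝ := ∫ ω, Real.log (1 + X 0 ω j) with hg1def
  -- basic positivity facts
  have hM : ∀ᵐ ω ∂(ℙ : Measure Ω), ∀ k i, Xmin i ≤ X k ω i ∧ X k ω i ≤ Xmax i := ae_all_iff.2 hbdd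
  obtain ⟨ω0, hω0⟩ := hM.exists
  have hminmax : ∀ i, Xmin i ≤ Xmax i := fun i => le_trans (hω0 0 i).1 (hω0 0 i).2
  have h1min : ∀ i, (0:ℝ) < 1 + Xmin i := fun i => by linarith [hXmin i]
  have h1max : ∀ i, (0:ℝ) < 1 + Xmax i := fun i => by linarith [hXmin i, hminmax i]
  set lo : Fin m → ℝ := fun i => (1 + Xmin i) / (1 + Xmax j) with hlodef
  set hi : Fin m → ℝ := fun i => (1 + Xmax i) / (1 + Xmin j) with hhidef
  have hlopos : ∀ i, 0 < lo i := fun i => div_pos (h1min i) (h1max j)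
  have hhipos : ∀ i, 0 < hi i := fun i => div_pos (h1max i) (h1min j)
  -- measurability
  have hgm : ∀ i : Fin m, Measurable (fun v : Fin m → ℝ => (1 + v i) / (1 + v j)) := fun i =>
    (measurable_const.add (measurable_pi_apply i)).div (measurable_const.add (measurable_pi_apply j))
  have hfmeas : ∀ i k, Measurable (auxRatio X j i k) := fun i k => (hgm i).comp (hmeas k)
  have hZmeas : ∀ n, Measurable (auxZ X j K n) := fun n =>
    Finset.measurable_sum _ fun i _ =>
      (Finset.measurable_prod _ fun k _ => hfmeas i k).const_mul (K i)
  -- pointwise bounds on ratios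
  have hpt : ∀ ω, (∀ k i, Xmin i ≤ X k ω i ∧ X k ω i ≤ Xmax i) →
      ∀ k i, (0 < 1 + X k ω i) ∧ lo i ≤ auxRatio X j i k ω ∧ auxRatio X j i k ω ≤ hi i := by
    intro ω h k i
    have h1 := (h k i).1; have h2 := (h k i).2
    have h3 := (h k j).1; have h4 := (h k j).2
    have hposi : (0:ℝ) < 1 + X k ω i := lt_of_lt_of_le (h1min i) (by linarith)
    have hposj : (0:ℝ) < 1 + X k ω j := lt_of_lt_of_le (h1min j) (by linarith)
    refine ⟨hposi, ?_, ?_⟩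
    · exact div_le_div₀ (le_of_lt hposi) (by linarith) hposj (by linarith)
    · exact div_le_div₀ (le_of_lt (h1max i)) (by linarith) (h1min j) (by linarith)
  -- a.e. bounds on Z
  have hZlb : ∀ n, ∀ᵐ ω ∂(ℙ : Measure Ω), K j ≤ auxZ X j K n ω := by
    intro n
    filter_upwards [hM] with ω hω
    have hYj : ∏ k ∈ Finset.range n, auxRatio X j j k ω = 1 := by
      apply Finset.prod_eq_one
      intro k _
      exact div_self (ne_of_gt ((hpt ω hω k j).1))
    calc K j = K j * ∏ k ∈ Finset.range n, auxRatio X j j k ω := by rw [hYj, mul_one]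
      _ ≤ auxZ X j K n ω := by
          refine Finset.single_le_sum (f := fun i => K i * ∏ k ∈ Finset.range n, auxRatio X j i k ω)
            (fun i _ => mul_nonneg (hK0 i) (Finset.prod_nonneg fun k _ =>
              le_of_lt (lt_of_lt_of_le (hlopos i) (hpt ω hω k i).2.1))) (Finset.mem_univ j)
  have hZub : ∀ n, ∀ᵐ ω ∂(ℙ : Measure Ω), auxZ X j K n ω ≤ ∑ i, K i * hi i ^ n := by
    intro n
    filter_upwards [hM] with ω hω
    apply Finset.sum_le_sum
    intro i _
    refine mul_le_mul_of_nonneg_left ?_ (hK0 i)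
    calc ∏ k ∈ Finset.range n, auxRatio X j i k ω ≤ ∏ _k ∈ Finset.range n, hi i :=
          Finset.prod_le_prod (fun k _ => le_of_lt (lt_of_lt_of_le (hlopos i) (hpt ω hω k i).2.1))
            (fun k _ => (hpt ω hω k i).2.2)
      _ = hi i ^ n := by simp
  set U : ℕ → ℝ := fun n => ∑ i, K i * hi i ^ n with hUdef
  have hUpos : ∀ n, 0 < U n := by
    intro n
    have : 0 < K j * hi j ^ n := mul_pos hKj (pow_pos (hhipos j) n)
    refine lt_of_lt_of_le this (Finset.single_le_sum (f := fun i => K i * hi i ^ n)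
      (fun i _ => mul_nonneg (hK0 i) (le_of_lt (pow_pos (hhipos i) n))) (Finset.mem_univ j))
  -- integrability
  have hYint : ∀ i n, Integrable (fun ω => ∏ k ∈ Finset.range n, auxRatio X j i k ω) ℙ := by
    intro i n
    refine Integrable.mono' (integrable_const (hi i ^ n))
      (Finset.measurable_prod _ fun k _ => hfmeas i k).aestronglyMeasurable ?_
    filter_upwards [hM] with ω hω
    rw [Real.norm_eq_abs, abs_of_nonneg (Finset.prod_nonneg fun k _ =>
      le_of_lt (lt_of_lt_of_le (hlopos i) (hpt ω hω k i).2.1))]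
    calc ∏ k ∈ Finset.range n, auxRatio X j i k ω ≤ ∏ _k ∈ Finset.range n, hi i :=
          Finset.prod_le_prod (fun k _ => le_of_lt (lt_of_lt_of_le (hlopos i) (hpt ω hω k i).2.1))
            (fun k _ => (hpt ω hω k i).2.2)
      _ = hi i ^ n := by simp
  have hZint : ∀ n, Integrable (auxZ X j K n) ℙ := fun n =>
    integrable_finset_sum _ fun i _ => (hYint i n).const_mul (K i)
  have hlogZint : ∀ n, Integrable (fun ω => Real.log (auxZ X j K n ω)) ℙ := by
    intro n
    refine Integrable.mono' (integrable_const (max |Real.log (K j)| |Real.log (U n)|))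
      (Real.measurable_log.comp (hZmeas n)).aestronglyMeasurable ?_
    filter_upwards [hZlb n, hZub n] with ω h1 h2
    rw [Real.norm_eq_abs, abs_le]
    constructor
    · calc -(max |Real.log (K j)| |Real.log (U n)|) ≤ -|Real.log (K j)| := by
            exact neg_le_neg (le_max_left _ _)
        _ ≤ Real.log (K j) := neg_abs_le _
        _ ≤ Real.log (auxZ X j K n ω) := Real.log_le_log hKj h1
    · calc Real.log (auxZ X j K n ω) ≤ Real.log (U n) :=
            Real.log_le_log (lt_of_lt_of_le hKj h1) h2
        _ ≤ |Real.log (U n)| := le_abs_self _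
        _ ≤ _ := le_max_right _ _
  -- expectation of Z is at most 1
  have hintY_le : ∀ i n, ∫ ω, ∏ k ∈ Finset.range n, auxRatio X j i k ω ≤ 1 := by
    intro i n
    rcases eq_or_ne i j with hij | hij
    · rw [hij]
      have h1 : (fun ω => ∏ k ∈ Finset.range n, auxRatio X j j k ω) =ᵐ[ℙ] fun _ => (1:ℝ) := by
        filter_upwards [hM] with ω hω
        refine Finset.prod_eq_one fun k _ => ?_
        simp only [auxRatio]
        exact div_self (ne_of_gt ((hpt ω hω k j).1))
      rw [integral_congr_ae h1, integral_const]; simp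
    · have hind : iIndepFun (fun k => auxRatio X j i k) ℙ :=
        hiid.comp (fun _ v => (1 + v i) / (1 + v j)) (fun _ => hgm i)
      have hbd : ∀ k, ∀ᵐ ω ∂(ℙ : Measure Ω), 0 ≤ auxRatio X j i k ω ∧ auxRatio X j i k ω ≤ hi i := by
        intro k
        filter_upwards [hM] with ω hω
        exact ⟨le_of_lt (lt_of_lt_of_le (hlopos i) (hpt ω hω k i).2.1), (hpt ω hω k i).2.2⟩
      rw [aux_integral_prod_range (fun k => auxRatio X j i k) hind (hfmeas i) (hi i) hbd n]
      have heq : ∀ k, ∫ ω, auxRatio X j i k ω = ∫ ω, auxRatio X j i 0 ω := by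
        intro k
        exact ((hident k).comp (hgm i)).integral_eq
      have hle1 : ∫ ω, auxRatio X j i 0 ω ≤ 1 := hdom i hij
      have hge0 : 0 ≤ ∫ ω, auxRatio X j i 0 ω := by
        refine integral_nonneg_of_ae ?_
        filter_upwards [hM] with ω hω
        exact le_of_lt (lt_of_lt_of_le (hlopos i) (hpt ω hω 0 i).2.1)
      calc ∏ k ∈ Finset.range n, ∫ ω, auxRatio X j i k ω
          = (∫ ω, auxRatio X j i 0 ω) ^ n := by
            rw [Finset.prod_congr rfl fun k _ => heq k]; simp
        _ ≤ 1 := pow_le_one₀ hge0 hle1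
  have hEZ : ∀ n, ∫ ω, auxZ X j K n ω ≤ 1 := by
    intro n
    have : ∫ ω, auxZ X j K n ω = ∑ i, K i * ∫ ω, ∏ k ∈ Finset.range n, auxRatio X j i k ω := by
      rw [show (fun ω => auxZ X j K n ω) = fun ω => ∑ i, K i * ∏ k ∈ Finset.range n, auxRatio X j i k ω from rfl]
      rw [integral_finset_sum _ fun i _ => (hYint i n).const_mul (K i)]
      exact Finset.sum_congr rfl fun i _ => integral_const_mul _ _
    rw [this, ← hK1]
    refine Finset.sum_le_sum fun i _ => ?_
    calc K i * ∫ ω, ∏ k ∈ Finset.range n, auxRatio X j i k ω ≤ K i * 1 :=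
        mul_le_mul_of_nonneg_left (hintY_le i n) (hK0 i)
      _ = K i := mul_one _
  -- bounds on A n = ∫ log Z n
  have hup : ∀ n, ∫ ω, Real.log (auxZ X j K n ω) ≤ 0 := by
    intro n
    have h1 : ∫ ω, Real.log (auxZ X j K n ω) ≤ ∫ ω, (auxZ X j K n ω - 1) := by
      refine integral_mono_ae (hlogZint n) ((hZint n).sub (integrable_const 1)) ?_
      filter_upwards [hZlb n] with ω h
      exact Real.log_le_sub_one_of_pos (lt_of_lt_of_le hKj h)
    have h2 : ∫ ω, (auxZ X j K n ω - 1) = (∫ ω, auxZ X j K n ω) - 1 := by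
      rw [integral_sub (hZint n) (integrable_const 1), integral_const]; simp
    linarith [hEZ n]
  have hlow : ∀ n, Real.log (K j) ≤ ∫ ω, Real.log (auxZ X j K n ω) := by
    intro n
    have := integral_mono_ae (integrable_const (Real.log (K j))) (hlogZint n)
      (by filter_upwards [hZlb n] with ω h; exact Real.log_le_log hKj h)
    simpa using this
  -- the key identity
  have hlogterm_int : ∀ k, Integrable (fun ω => Real.log (1 + X k ω j)) ℙ := by
    intro k
    refine Integrable.mono' (integrable_const (max |Real.log (1 + Xmin j)| |Real.log (1 + Xmax j)|))
      (Real.measurable_log.comp (measurable_const.add ((measurable_pi_apply j).comp (hmeas k)))).aestronglyMeasurable ?_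
    filter_upwards [hbdd k] with ω hω
    have h1 := (hω j).1; have h2 := (hω j).2
    have hpos : (0:ℝ) < 1 + X k ω j := lt_of_lt_of_le (h1min j) (by linarith)
    rw [Real.norm_eq_abs, abs_le]
    constructor
    · calc -(max _ _) ≤ -|Real.log (1 + Xmin j)| := neg_le_neg (le_max_left _ _)
        _ ≤ Real.log (1 + Xmin j) := neg_abs_le _
        _ ≤ Real.log (1 + X k ω j) := Real.log_le_log (h1min j) (by linarith)
    · calc Real.log (1 + X k ω j) ≤ Real.log (1 + Xmax j) := Real.log_le_log hpos (by linarith)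
        _ ≤ |Real.log (1 + Xmax j)| := le_abs_self _
        _ ≤ _ := le_max_right _ _
  have hlogterm_eq : ∀ k, ∫ ω, Real.log (1 + X k ω j) = g1 := by
    intro k
    exact ((hident k).comp (Real.measurable_log.comp
      (measurable_const.add (measurable_pi_apply j)))).integral_eq
  have hkey : ∀ n, ∫ ω, Real.log (∑ i, K i * compoundReturn X n ω i)
      = n * g1 + ∫ ω, Real.log (auxZ X j K n ω) := by
    intro n
    have hae : (fun ω => Real.log (∑ i, K i * compoundReturn X n ω i)) =ᵐ[ℙ]
        fun ω => (∑ k ∈ Finset.range n, Real.log (1 + X k ω j)) + Real.log (auxZ X j K n ω) := by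
      filter_upwards [hM, hZlb n] with ω hω hZ
      have hRpos : ∀ i, 0 < compoundReturn X n ω i := fun i =>
        Finset.prod_pos fun k _ => (hpt ω hω k i).1
      have hRj : compoundReturn X n ω j ≠ 0 := ne_of_gt (hRpos j)
      have hsum : ∑ i, K i * compoundReturn X n ω i
          = compoundReturn X n ω j * auxZ X j K n ω := by
        rw [auxZ, Finset.mul_sum]
        refine Finset.sum_congr rfl fun i _ => ?_
        have : ∏ k ∈ Finset.range n, auxRatio X j i k ω
            = compoundReturn X n ω i / compoundReturn X n ω j := by
          rw [compoundReturn, compoundReturn, ← Finset.prod_div_distrib]; rfl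
        rw [this]
        field_simp
      rw [hsum, Real.log_mul hRj (ne_of_gt (lt_of_lt_of_le hKj hZ)),
        compoundReturn, Real.log_prod (fun k _ => ne_of_gt (hpt ω hω k j).1)]
    rw [integral_congr_ae hae,
      integral_add (integrable_finset_sum _ fun k _ => hlogterm_int k) (hlogZint n),
      integral_finset_sum _ fun k _ => hlogterm_int k]
    congr 1
    rw [Finset.sum_congr rfl fun k _ => hlogterm_eq k]
    simp [mul_comm]
  -- conclusion
  have hfinal : (fun n : ℕ => elg X n K) =ᶠ[atTop]
      fun n : ℕ => g1 + (n : ℝ)⁻¹ * ∫ ω, Real.log (auxZ X j K n ω) := by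
    filter_upwards [eventually_ge_atTop 1] with n hn
    have hn0 : (n : ℝ) ≠ 0 := Nat.cast_ne_zero.2 (by omega)
    rw [elg, hkey n]
    field_simp
  have htend0 : Tendsto (fun n : ℕ => (n : ℝ)⁻¹ * ∫ ω, Real.log (auxZ X j K n ω)) atTop (𝓝 0) := by
    have hb : ∀ n : ℕ, ‖(n : ℝ)⁻¹ * ∫ ω, Real.log (auxZ X j K n ω)‖
        ≤ |Real.log (K j)| * (n : ℝ)⁻¹ := by
      intro n
      rw [Real.norm_eq_abs, abs_mul, abs_inv, Nat.abs_cast, mul_comm]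
      refine mul_le_mul_of_nonneg_right ?_ (by positivity)
      rw [abs_le]
      exact ⟨le_trans (neg_abs_le _) (hlow n), le_trans (hup n) (abs_nonneg _)⟩
    refine squeeze_zero_norm hb ?_
    have := (tendsto_inv_atTop_nhds_zero_nat (𝕜 := ℝ)).const_mul |Real.log (K j)|
    simpa using this
  have : Tendsto (fun n : ℕ => g1 + (n : ℝ)⁻¹ * ∫ ω, Real.log (auxZ X j K n ω)) atTop (𝓝 g1) := by
    have := tendsto_const_nhds.add htend0 (f := fun _ : ℕ => g1) (x := atTop)
    simpa using this
  exact this.congr' hfinal.symm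
end

section
/- Assume that for every n ≥ 1 the compound return vector R_n and the next one-period return vector X(n) are independent. Then for every integer n > 1 and every portfolio weight K ∈ 𝒦, g_n(K) ≤ ((n−1)/n)·g_{n−1}* + (1/n)·g_1(K). -/
open MeasureTheory ProbabilityTheory Filter Topology Finset Real

lemma aux_abs_log_le {a b x : ℝ} (ha : 0 < a) (hax : a ≤ x) (hxb : x ≤ b) :
    |Real.log x| ≤ |Real.log a| + |Real.log b| := by
  have hx : 0 < x := lt_of_lt_of_le ha hax
  have h1 : Real.log x ≤ Real.log b := Real.log_le_log hx hxb
  have h2 : Real.log a ≤ Real.log x := Real.log_le_log ha hax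
  rw [abs_le]
  constructor
  · nlinarith [neg_abs_le (Real.log a), abs_nonneg (Real.log b)]
  · nlinarith [le_abs_self (Real.log b), abs_nonneg (Real.log a)]

lemma aux_simplex_sum {m : ℕ} {K r : Fin m → ℝ} (hK : K ∈ simplex m) {a b : ℝ}
    (hr : ∀ i, a ≤ r i ∧ r i ≤ b) :
    a ≤ ∑ i, K i * r i ∧ (∑ i, K i * r i) ≤ b := by
  obtain ⟨hK0, hK1⟩ := hK
  constructor
  · calc a = (∑ i, K i) * a := by rw [hK1, one_mul]
    _ = ∑ i, K i * a := Finset.sum_mul ..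
    _ ≤ ∑ i, K i * r i :=
        Finset.sum_le_sum fun i _ => mul_le_mul_of_nonneg_left (hr i).1 (hK0 i)
  · calc ∑ i, K i * r i ≤ ∑ i, K i * b :=
        Finset.sum_le_sum fun i _ => mul_le_mul_of_nonneg_left (hr i).2 (hK0 i)
    _ = (∑ i, K i) * b := (Finset.sum_mul ..).symm
    _ = b := by rw [hK1, one_mul]

lemma aux_integrable_of_bound {α : Type*} [MeasurableSpace α] {μ : Measure α}
    [IsFiniteMeasure μ] {f : α → ℝ} (hf : AEStronglyMeasurable f μ) (C : ℝ)
    (h : ∀ᵐ x ∂μ, |f x| ≤ C) : Integrable f μ :=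
  (integrable_const C).mono' hf (by simpa [Real.norm_eq_abs] using h)

lemma aux_meas_compound {Ω : Type*} [MeasurableSpace Ω] {m : ℕ} (X : ℕ → Ω → Fin m → ℝ)
    (hmeas : ∀ k, Measurable (X k)) (q : ℕ) (i : Fin m) :
    Measurable (fun ω => compoundReturn X q ω i) := by
  unfold compoundReturn
  exact Finset.measurable_prod _ fun k _ =>
    measurable_const.add ((measurable_pi_apply i).comp (hmeas k))

lemma aux_compound_bounds {Ω : Type*} {m : ℕ} (X : ℕ → Ω → Fin m → ℝ) {c C : ℝ}
    (q : ℕ) (ω : Ω) (hc : 0 ≤ c)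
    (h : ∀ k, ∀ i, c ≤ 1 + X k ω i ∧ 1 + X k ω i ≤ C) (i : Fin m) :
    c ^ q ≤ compoundReturn X q ω i ∧ compoundReturn X q ω i ≤ C ^ q := by
  unfold compoundReturn
  constructor
  · calc c ^ q = ∏ _k ∈ Finset.range q, c := by
          rw [Finset.prod_const, Finset.card_range]
      _ ≤ ∏ k ∈ Finset.range q, (1 + X k ω i) :=
          Finset.prod_le_prod (fun _ _ => hc) (fun k _ => (h k i).1)
  · calc ∏ k ∈ Finset.range q, (1 + X k ω i) ≤ ∏ _k ∈ Finset.range q, C :=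
          Finset.prod_le_prod (fun k _ => hc.trans (h k i).1) (fun k _ => (h k i).2)
      _ = C ^ q := by rw [Finset.prod_const, Finset.card_range]

lemma aux_map_tuple_eq_pi {Ω : Type*} [MeasureSpace Ω] [IsProbabilityMeasure (ℙ : Measure Ω)]
    {m p : ℕ} [Nonempty (Fin p)] (X : ℕ → Ω → Fin m → ℝ) (hmeas : ∀ k, Measurable (X k))
    (hiid : iIndepFun X ℙ) (φ : Fin p → ℕ)
    (hφ : Function.Injective φ) :
    Measure.map (fun ω (j : Fin p) => X (φ j) ω) ℙ
      = Measure.pi (fun j => Measure.map (X (φ j)) ℙ) := by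
  haveI : ∀ j : Fin p, IsProbabilityMeasure (Measure.map (X (φ j)) ℙ) :=
    fun j => Measure.isProbabilityMeasure_map (hmeas (φ j)).aemeasurable
  have hT : Measurable (fun ω (j : Fin p) => X (φ j) ω) :=
    measurable_pi_lambda _ fun j => hmeas (φ j)
  refine (Measure.pi_eq fun s hs => ?_).symm
  rw [Measure.map_apply hT (MeasurableSet.univ_pi hs)]
  set sets : ℕ → Set (Fin m → ℝ) := fun k => s (Function.invFun φ k) with hsets
  have hrw : ∀ j : Fin p, sets (φ j) = s j := fun j => by
    simp [hsets, Function.leftInverse_invFun hφ j]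
  have hpre : (fun ω (j : Fin p) => X (φ j) ω) ⁻¹' Set.univ.pi s
      = ⋂ k ∈ Finset.image φ Finset.univ, X k ⁻¹' sets k := by
    ext ω
    simp only [Set.mem_preimage, Set.mem_pi, Set.mem_univ, forall_true_left, Set.mem_iInter,
      Finset.mem_image, Finset.mem_univ, true_and, forall_exists_index]
    constructor
    · rintro h k j rfl
      rw [hrw j]; exact h j
    · intro h j
      have := h (φ j) j rfl
      rwa [hrw j] at this
  rw [hpre, hiid.measure_inter_preimage_eq_mul _ (sets := sets)
      (fun k hk => by
        obtain ⟨j, -, rfl⟩ := Finset.mem_image.1 hk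
        rw [hrw j]; exact hs j)]
  rw [Finset.prod_image (fun a _ b _ h => hφ h)]
  exact Finset.prod_congr rfl fun j _ => by
    rw [hrw j, Measure.map_apply (hmeas (φ j)) (hs j)]

lemma aux_indep_head_tail {Ω : Type*} [MeasureSpace Ω] [IsProbabilityMeasure (ℙ : Measure Ω)]
    {m p : ℕ} (X : ℕ → Ω → Fin m → ℝ) (hmeas : ∀ k, Measurable (X k))
    (hiid : iIndepFun X ℙ) :
    IndepFun (X 0) (fun ω (j : Fin p) => X ((j : ℕ) + 1) ω) ℙ := by
  have hdisj : Disjoint ({0} : Finset ℕ)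
      (Finset.image (fun j : Fin p => (j : ℕ) + 1) Finset.univ) := by
    simp [Finset.disjoint_left]
  have h := hiid.indepFun_finset {0}
    (Finset.image (fun j : Fin p => (j : ℕ) + 1) Finset.univ) hdisj hmeas
  set T : Finset ℕ := Finset.image (fun j : Fin p => (j : ℕ) + 1) Finset.univ with hT
  have hψ : Measurable (fun v : (T → (Fin m → ℝ)) => fun j : Fin p =>
      v ⟨(j : ℕ) + 1, by simp [hT]⟩) :=
    measurable_pi_lambda _ fun j => measurable_pi_apply _
  have hφm : Measurable (fun v : (({0} : Finset ℕ) → (Fin m → ℝ)) => v ⟨0, by simp⟩) :=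
    measurable_pi_apply _
  exact h.comp hφm hψ

/-- Pointwise version of the recursion: under the independence hypothesis on `R_n` and `X(n)`,
for every `n > 1` and every `K` in the simplex, `g_n(K) ≤ ((n-1)/n) g_{n-1}^* + (1/n) g_1(K)`. -/
theorem elg_recursion_pointwise
    {Ω : Type*} [MeasureSpace Ω] [IsProbabilityMeasure (ℙ : Measure Ω)]
    {m : ℕ} (hm : 2 ≤ m)
    (X : ℕ → Ω → Fin m → ℝ)
    (hmeas : ∀ k, Measurable (X k))
    (hiid : iIndepFun X ℙ)
    (hident : ∀ k, IdentDistrib (X k) (X 0) ℙ ℙ)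
    (Xmin Xmax : Fin m → ℝ)
    (hXmin : ∀ i, -1 < Xmin i)
    (hbdd : ∀ k, ∀ᵐ ω ∂(ℙ : Measure Ω), ∀ i, Xmin i ≤ X k ω i ∧ X k ω i ≤ Xmax i)
    (hRindep : ∀ n : ℕ, 1 ≤ n →
      IndepFun (fun ω => compoundReturn X n ω) (X n) ℙ) :
    ∀ n : ℕ, 1 < n → ∀ K ∈ simplex m,
      elg X n K ≤
        (((n : ℝ) - 1) / n) * sSup (elg X (n - 1) '' simplex m) +
          (n : ℝ)⁻¹ * elg X 1 K := by
  intro n hn K hK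
  obtain ⟨p, rfl⟩ : ∃ p, n = p + 1 := ⟨n - 1, (Nat.succ_pred_eq_of_pos (by omega)).symm⟩
  have hp : 1 ≤ p := by omega
  haveI : Nonempty (Fin m) := ⟨⟨0, by omega⟩⟩
  haveI : Nonempty (Fin p) := ⟨⟨0, by omega⟩⟩
  have hne : (Finset.univ : Finset (Fin m)).Nonempty := Finset.univ_nonempty
  -- uniform bounds on one-period gross returns
  set c1 : ℝ := Finset.univ.inf' hne fun i => min 1 (1 + Xmin i) with hc1def
  set C1 : ℝ := Finset.univ.sup' hne fun i => max 1 (1 + Xmax i) with hC1def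
  have hc1pos : 0 < c1 := by
    rw [hc1def, Finset.lt_inf'_iff]
    exact fun i _ => lt_min one_pos (by linarith [hXmin i])
  have hc1le : ∀ i, c1 ≤ 1 + Xmin i := fun i =>
    (Finset.inf'_le (fun i => min 1 (1 + Xmin i)) (Finset.mem_univ i)).trans (min_le_right _ _)
  have hC1ge : ∀ i, 1 + Xmax i ≤ C1 := fun i =>
    (le_max_right _ _).trans (Finset.le_sup' (fun i => max 1 (1 + Xmax i)) (Finset.mem_univ i))
  have hXbd : ∀ᵐ ω ∂(ℙ : Measure Ω), ∀ k i, c1 ≤ 1 + X k ω i ∧ 1 + X k ω i ≤ C1 := by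
    filter_upwards [ae_all_iff.2 hbdd] with ω h k i
    exact ⟨(hc1le i).trans (by linarith [(h k i).1]), by linarith [(h k i).2, hC1ge i]⟩
  -- a uniform a.e. bound on the log-integrands
  set M : ℕ → ℝ := fun q => |Real.log (c1 ^ q)| + |Real.log (C1 ^ q)| with hMdef
  have hmeaslog : ∀ (q : ℕ) (k : Fin m → ℝ),
      Measurable (fun ω => Real.log (∑ i, k i * compoundReturn X q ω i)) := by
    intro q k
    exact Real.measurable_log.comp <| Finset.measurable_sum _ fun i _ =>
      measurable_const.mul (aux_meas_compound X hmeas q i)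
  have hkey : ∀ (q : ℕ), ∀ k ∈ simplex m,
      ∀ᵐ ω ∂(ℙ : Measure Ω),
        |Real.log (∑ i, k i * compoundReturn X q ω i)| ≤ M q := by
    intro q k hk
    filter_upwards [hXbd] with ω h
    have hb := fun i => aux_compound_bounds X q ω hc1pos.le (fun k i => h k i) i
    have hs := aux_simplex_sum hk hb
    exact aux_abs_log_le (pow_pos hc1pos q) hs.1 hs.2
  have hint : ∀ (q : ℕ), ∀ k ∈ simplex m,
      Integrable (fun ω => Real.log (∑ i, k i * compoundReturn X q ω i)) ℙ := by
    intro q k hk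
    exact aux_integrable_of_bound (hmeaslog q k).aestronglyMeasurable (M q) (hkey q k hk)
  -- the sup of `elg X p` over the simplex is well behaved
  set S : ℝ := sSup (elg X p '' simplex m) with hSdef
  have hbddA : BddAbove (elg X p '' simplex m) := by
    refine ⟨(p : ℝ)⁻¹ * M p, ?_⟩
    rintro x ⟨k, hk, rfl⟩
    have h1 : (∫ ω, Real.log (∑ i, k i * compoundReturn X p ω i)) ≤ M p := by
      calc (∫ ω, Real.log (∑ i, k i * compoundReturn X p ω i))
          ≤ ∫ _ω, M p ∂(ℙ : Measure Ω) := by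
            refine integral_mono_ae (hint p k hk) (integrable_const _) ?_
            filter_upwards [hkey p k hk] with ω h using (le_abs_self _).trans h
        _ = M p := by simp
    exact mul_le_mul_of_nonneg_left h1 (by positivity)
  have hS_le : ∀ k ∈ simplex m, elg X p k ≤ S := fun k hk =>
    le_csSup hbddA ⟨k, hk, rfl⟩
  -- the tilted weights
  set k' : (Fin m → ℝ) → Fin m → ℝ :=
    fun a i => K i * (1 + a i) / (∑ j, K j * (1 + a j)) with hk'def
  set SA : Set (Fin m → ℝ) := {a | ∀ i, c1 ≤ 1 + a i ∧ 1 + a i ≤ C1} with hSAdef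
  have hSAmeas : MeasurableSet SA := by
    have : SA = ⋂ i, ({a : Fin m → ℝ | c1 ≤ 1 + a i} ∩ {a | 1 + a i ≤ C1}) := by
      ext a; simp [hSAdef, Set.mem_iInter, forall_and]
    rw [this]
    exact MeasurableSet.iInter fun i =>
      (measurableSet_le measurable_const (measurable_const.add (measurable_pi_apply i))).inter
        (measurableSet_le (measurable_const.add (measurable_pi_apply i)) measurable_const)
  have hDpos : ∀ a ∈ SA, (0 : ℝ) < ∑ j, K j * (1 + a j) := by
    intro a ha
    exact lt_of_lt_of_le hc1pos (aux_simplex_sum hK ha).1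
  have hk'simplex : ∀ a ∈ SA, k' a ∈ simplex m := by
    intro a ha
    refine ⟨fun i => div_nonneg (mul_nonneg (hK.1 i) (hc1pos.le.trans (ha i).1))
      (hDpos a ha).le, ?_⟩
    rw [hk'def]
    simp only
    rw [← Finset.sum_div, div_self (hDpos a ha).ne']
  -- F : the second-stage integrand on the product space
  set F : (Fin m → ℝ) × (Fin p → Fin m → ℝ) → ℝ :=
    fun z => Real.log (∑ i, k' z.1 i * ∏ j, (1 + z.2 j i)) with hFdef
  have hFmeas : Measurable F := by
    apply Real.measurable_log.comp
    apply Finset.measurable_sum _ fun i _ => Measurable.mul ?_ ?_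
    · apply Measurable.div
      · exact measurable_const.mul
          (measurable_const.add ((measurable_pi_apply i).comp measurable_fst))
      · exact Finset.measurable_sum _ fun j _ => measurable_const.mul
          (measurable_const.add ((measurable_pi_apply j).comp measurable_fst))
    · exact Finset.measurable_prod _ fun j _ => measurable_const.add
        ((measurable_pi_apply i).comp ((measurable_pi_apply j).comp measurable_snd))
  set SB : Set (Fin p → Fin m → ℝ) :=
    {b | ∀ j i, c1 ≤ 1 + b j i ∧ 1 + b j i ≤ C1} with hSBdef
  have hSBmeas : MeasurableSet SB := by
    have : SB = ⋂ j, ⋂ i, ({b : Fin p → Fin m → ℝ | c1 ≤ 1 + b j i} ∩ {b | 1 + b j i ≤ C1}) := by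
      ext b; simp [hSBdef, Set.mem_iInter, forall_and]
    rw [this]
    refine MeasurableSet.iInter fun j => MeasurableSet.iInter fun i => ?_
    have hb : Measurable fun b : Fin p → Fin m → ℝ => b j i :=
      (measurable_pi_apply i).comp (measurable_pi_apply j)
    exact (measurableSet_le measurable_const (measurable_const.add hb)).inter
      (measurableSet_le (measurable_const.add hb) measurable_const)
  have hprodbound : ∀ (b : Fin p → Fin m → ℝ), b ∈ SB → ∀ i,
      c1 ^ p ≤ ∏ j, (1 + b j i) ∧ (∏ j, (1 + b j i)) ≤ C1 ^ p := by
    intro b hb i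
    constructor
    · calc c1 ^ p = ∏ _j : Fin p, c1 := by
            rw [Finset.prod_const, Finset.card_univ, Fintype.card_fin]
        _ ≤ ∏ j, (1 + b j i) :=
            Finset.prod_le_prod (fun _ _ => hc1pos.le) (fun j _ => (hb j i).1)
    · calc (∏ j, (1 + b j i)) ≤ ∏ _j : Fin p, C1 :=
            Finset.prod_le_prod (fun j _ => hc1pos.le.trans (hb j i).1) (fun j _ => (hb j i).2)
        _ = C1 ^ p := by rw [Finset.prod_const, Finset.card_univ, Fintype.card_fin]
  have hFbound : ∀ z : (Fin m → ℝ) × (Fin p → Fin m → ℝ),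
      z.1 ∈ SA → z.2 ∈ SB → |F z| ≤ M p := by
    intro z ha hb
    have hs := aux_simplex_sum (hk'simplex z.1 ha) (hprodbound z.2 hb)
    exact aux_abs_log_le (pow_pos hc1pos p) hs.1 hs.2
  -- the tail tuple and its law
  set B : Ω → Fin p → Fin m → ℝ := fun ω j => X ((j : ℕ) + 1) ω with hBdef
  set B' : Ω → Fin p → Fin m → ℝ := fun ω j => X (j : ℕ) ω with hB'def
  have hBmeas : Measurable B := measurable_pi_lambda _ fun j => hmeas _
  have hB'meas : Measurable B' := measurable_pi_lambda _ fun j => hmeas _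
  set μ0 : Measure (Fin m → ℝ) := Measure.map (X 0) ℙ with hμ0def
  haveI : IsProbabilityMeasure μ0 := Measure.isProbabilityMeasure_map (hmeas 0).aemeasurable
  set μB : Measure (Fin p → Fin m → ℝ) := Measure.pi (fun _ => μ0) with hμBdef
  haveI : IsProbabilityMeasure μB := by
    rw [hμBdef]; infer_instance
  have hmapB : Measure.map B ℙ = μB := by
    rw [hBdef, aux_map_tuple_eq_pi X hmeas hiid (fun j : Fin p => (j : ℕ) + 1)
      (fun a b h => Fin.val_injective (by simpa using h))]
    rw [hμBdef]
    congr 1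
    funext j
    exact (hident ((j : ℕ) + 1)).map_eq
  have hmapB' : Measure.map B' ℙ = μB := by
    rw [hB'def, aux_map_tuple_eq_pi X hmeas hiid (fun j : Fin p => (j : ℕ))
      (fun a b h => Fin.val_injective h)]
    rw [hμBdef]
    congr 1
    funext j
    exact (hident (j : ℕ)).map_eq
  have hAB : IndepFun (X 0) B ℙ := aux_indep_head_tail X hmeas hiid
  have hmapPair : Measure.map (fun ω => (X 0 ω, B ω)) ℙ = μ0.prod μB := by
    rw [(indepFun_iff_map_prod_eq_prod_map_map (hmeas 0).aemeasurable
      hBmeas.aemeasurable).1 hAB, hmapB, hμ0def]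
  -- a.e. membership in SA, SB
  have hSA_ae : ∀ᵐ a ∂μ0, a ∈ SA := by
    rw [hμ0def]
    exact (ae_map_iff (hmeas 0).aemeasurable hSAmeas).2
      (by filter_upwards [hXbd] with ω h using fun i => h 0 i)
  have hSB_ae : ∀ᵐ b ∂μB, b ∈ SB := by
    rw [← hmapB]
    exact (ae_map_iff hBmeas.aemeasurable hSBmeas).2
      (by filter_upwards [hXbd] with ω h using fun j i => h ((j : ℕ) + 1) i)
  have hprod_ae : ∀ᵐ z ∂(μ0.prod μB), z.1 ∈ SA ∧ z.2 ∈ SB := by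
    rw [ae_iff]
    have hset : {z : (Fin m → ℝ) × (Fin p → Fin m → ℝ) | ¬ (z.1 ∈ SA ∧ z.2 ∈ SB)}
        = (SA ×ˢ SB)ᶜ := by
      ext z; simp [Set.mem_prod]
    rw [hset, Set.compl_prod_eq_union]
    refine measure_union_null ?_ ?_
    · rw [Measure.prod_prod]
      have : μ0 SAᶜ = 0 := by
        rw [Set.compl_def]
        exact ae_iff.mp hSA_ae
      simp [this]
    · rw [Measure.prod_prod]
      have : μB SBᶜ = 0 := by
        rw [Set.compl_def]
        exact ae_iff.mp hSB_ae
      simp [this]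
  -- integrability on the product space
  have hFint : Integrable F (μ0.prod μB) := by
    refine aux_integrable_of_bound hFmeas.aestronglyMeasurable (M p) ?_
    filter_upwards [hprod_ae] with z hz using hFbound z hz.1 hz.2
  -- pointwise decomposition of the n-period integrand
  have hdecomp : ∀ᵐ ω ∂(ℙ : Measure Ω),
      Real.log (∑ i, K i * compoundReturn X (p + 1) ω i)
        = Real.log (∑ i, K i * compoundReturn X 1 ω i) + F (X 0 ω, B ω) := by
    filter_upwards [hXbd] with ω hω
    have ha : X 0 ω ∈ SA := fun i => hω 0 i
    have hB_SB : B ω ∈ SB := fun j i => hω ((j : ℕ) + 1) i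
    set D : ℝ := ∑ j, K j * (1 + X 0 ω j) with hD
    have hDpos' : 0 < D := hDpos _ ha
    set T : ℝ := ∑ i, k' (X 0 ω) i * ∏ j, (1 + B ω j i) with hT
    have hTpos : 0 < T := by
      have := (aux_simplex_sum (hk'simplex _ ha) (hprodbound _ hB_SB)).1
      calc (0 : ℝ) < c1 ^ p := pow_pos hc1pos p
        _ ≤ T := this
    have hsum : ∑ i, K i * compoundReturn X (p + 1) ω i = D * T := by
      rw [hT, Finset.mul_sum]
      refine Finset.sum_congr rfl fun i _ => ?_
      have hcomp : compoundReturn X (p + 1) ω i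
          = (∏ j : Fin p, (1 + B ω j i)) * (1 + X 0 ω i) := by
        unfold compoundReturn
        rw [Finset.prod_range_succ']
        congr 1
        rw [hBdef]
        exact (Fin.prod_univ_eq_prod_range (fun k => 1 + X (k + 1) ω i) p).symm
      have hk'val : k' (X 0 ω) i * D = K i * (1 + X 0 ω i) := by
        rw [hk'def, hD]
        field_simp
        exact mul_div_cancel_right₀ _ (hDpos _ ha).ne'
      rw [hcomp]
      calc K i * ((∏ j, (1 + B ω j i)) * (1 + X 0 ω i))
          = (K i * (1 + X 0 ω i)) * ∏ j, (1 + B ω j i) := by ring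
        _ = (k' (X 0 ω) i * D) * ∏ j, (1 + B ω j i) := by rw [hk'val]
        _ = D * (k' (X 0 ω) i * ∏ j, (1 + B ω j i)) := by ring
    have hone : ∑ i, K i * compoundReturn X 1 ω i = D := by
      rw [hD]
      refine Finset.sum_congr rfl fun i _ => ?_
      unfold compoundReturn
      rw [Finset.prod_range_one]
    rw [hsum, Real.log_mul hDpos'.ne' hTpos.ne', hone, hFdef]
  -- combine the integrals
  have hint2 : Integrable (fun ω => F (X 0 ω, B ω)) ℙ := by
    refine aux_integrable_of_bound
      ((hFmeas.comp ((hmeas 0).prodMk hBmeas)).aestronglyMeasurable) (M p) ?_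
    filter_upwards [hXbd] with ω h
    exact hFbound (X 0 ω, B ω) (fun i => h 0 i) (fun j i => h ((j : ℕ) + 1) i)
  have hI : (∫ ω, Real.log (∑ i, K i * compoundReturn X (p + 1) ω i))
      = (∫ ω, Real.log (∑ i, K i * compoundReturn X 1 ω i))
        + ∫ ω, F (X 0 ω, B ω) := by
    rw [integral_congr_ae hdecomp]
    exact integral_add (hint 1 K hK) hint2
  -- evaluate the second integral via independence and Fubini
  have hstep3 : (∫ ω, F (X 0 ω, B ω)) = ∫ z, F z ∂(μ0.prod μB) := by
    rw [← hmapPair]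
    exact (integral_map ((hmeas 0).prodMk hBmeas).aemeasurable
      hFmeas.aestronglyMeasurable).symm
  have hinner : ∀ a : Fin m → ℝ, (∫ b, F (a, b) ∂μB) = (p : ℝ) * elg X p (k' a) := by
    intro a
    have h1 : (∫ b, F (a, b) ∂μB) = ∫ ω, F (a, B' ω) ∂(ℙ : Measure Ω) := by
      rw [← hmapB']
      exact integral_map hB'meas.aemeasurable
        ((hFmeas.comp measurable_prodMk_left).aestronglyMeasurable)
    rw [h1]
    have h2 : ∀ ω, F (a, B' ω) = Real.log (∑ i, k' a i * compoundReturn X p ω i) := by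
      intro ω
      rw [hFdef]
      simp only
      congr 1
      refine Finset.sum_congr rfl fun i _ => ?_
      congr 1
      rw [hB'def]
      unfold compoundReturn
      exact Fin.prod_univ_eq_prod_range (fun k => 1 + X k ω i) p
    simp_rw [h2]
    rw [elg, ← mul_assoc, mul_inv_cancel₀ (by positivity : ((p : ℝ)) ≠ 0), one_mul]
  have hstep45 : (∫ z, F z ∂(μ0.prod μB)) ≤ (p : ℝ) * S := by
    rw [integral_prod F hFint]
    have hintegrand : Integrable (fun a => ∫ b, F (a, b) ∂μB) μ0 :=
      hFint.integral_prod_left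
    calc (∫ a, ∫ b, F (a, b) ∂μB ∂μ0) ≤ ∫ _a, (p : ℝ) * S ∂μ0 := by
            refine integral_mono_ae hintegrand (integrable_const _) ?_
            filter_upwards [hSA_ae] with a ha
            rw [hinner a]
            exact mul_le_mul_of_nonneg_left (hS_le _ (hk'simplex a ha)) (by positivity)
      _ = (p : ℝ) * S := by simp
  have hJ : (∫ ω, F (X 0 ω, B ω)) ≤ (p : ℝ) * S := hstep3.trans_le hstep45
  -- final arithmetic
  have hE1 : (∫ ω, Real.log (∑ i, K i * compoundReturn X 1 ω i)) = elg X 1 K := by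
    rw [elg]; simp
  have hnp1 : (0 : ℝ) < (p : ℝ) + 1 := by positivity
  have hgoal : elg X (p + 1) K
      ≤ ((p : ℝ) + 1)⁻¹ * (elg X 1 K + (p : ℝ) * S) := by
    rw [elg, hI, hE1]
    have hcast : ((p + 1 : ℕ) : ℝ) = (p : ℝ) + 1 := by push_cast; ring
    rw [hcast]
    exact mul_le_mul_of_nonneg_left (add_le_add_right hJ _) (by positivity)
  have hrw : (p + 1 : ℕ) - 1 = p := by omega
  rw [hrw]
  calc elg X (p + 1) K ≤ ((p : ℝ) + 1)⁻¹ * (elg X 1 K + (p : ℝ) * S) := hgoal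
    _ = (((p + 1 : ℕ) : ℝ) - 1) / ((p + 1 : ℕ) : ℝ) * S
        + (((p + 1 : ℕ) : ℝ))⁻¹ * elg X 1 K := by
      push_cast
      field_simp
      ring
end
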